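/- arXiv:1602.06394 — 4 statements merged into one kernel-verified Lean document; each statement's English description precedes it below -/
import Mathlib

section
/- Let ĉ₁, ĉ₂ > 0 and set q = √(ĉ₂/(2ĉ₁)). Define κ : ℝ → ℝ by κ(y) = (1/ĉ₁)·(1 − 2·q·y·exp(−q²y²)·∫₀^{qy} exp(t²) dt). Then for every y ∈ ℝ, the steady-state equation −1 + ĉ₁·κ(y) + ĉ₂·y·(∫₀^{y} κ(η) dη) = 0 holds. -/
open Real MeasureTheory intervalIntegral

/-- the closed-form curvature function solves the local steady-state
equation `-1 + ĉ₁ κ(y) + ĉ₂ y ∫₀^y κ = 0`. -/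
theorem steady_state_closed_form_solution
    (c1 c2 : ℝ) (hc1 : 0 < c1) (hc2 : 0 < c2)
    (q : ℝ) (hq : q = Real.sqrt (c2 / (2 * c1)))
    (κ : ℝ → ℝ)
    (hκ : ∀ y : ℝ, κ y =
      (1 / c1) * (1 - 2 * q * y * Real.exp (-(q ^ 2 * y ^ 2)) *
        ∫ t in (0:ℝ)..(q * y), Real.exp (t ^ 2))) :
    ∀ y : ℝ, -1 + c1 * κ y + c2 * y * (∫ η in (0:ℝ)..y, κ η) = 0 := by
  intro y
  have hpos : 0 < c2 / (2 * c1) := div_pos hc2 (by linarith)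
  have hq0 : 0 < q := hq ▸ Real.sqrt_pos.2 hpos
  have hq2 : q ^ 2 = c2 / (2 * c1) := by
    rw [hq, sq, Real.mul_self_sqrt hpos.le]
  have hc2eq : c2 = 2 * c1 * q ^ 2 := by
    rw [hq2]; field_simp
  set E : ℝ → ℝ := fun x => ∫ t in (0:ℝ)..x, Real.exp (t ^ 2) with hE
  have hcontexp : Continuous fun t : ℝ => Real.exp (t ^ 2) :=
    Real.continuous_exp.comp (continuous_pow 2)
  have hEderiv : ∀ x : ℝ, HasDerivAt E (Real.exp (x ^ 2)) x := fun x =>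
    intervalIntegral.integral_hasDerivAt_right
      (hcontexp.intervalIntegrable _ _)
      (hcontexp.stronglyMeasurableAtFilter _ _)
      hcontexp.continuousAt
  have hEcont : Continuous E :=
    Differentiable.continuous (fun x => (hEderiv x).differentiableAt)
  set G : ℝ → ℝ := fun x =>
    (1 / (c1 * q)) * (Real.exp (-(q ^ 2 * x ^ 2)) * E (q * x)) with hG
  have hGderiv : ∀ x : ℝ, HasDerivAt G (κ x) x := by
    intro x
    have h1 : HasDerivAt (fun x : ℝ => Real.exp (-(q ^ 2 * x ^ 2)))
        (Real.exp (-(q ^ 2 * x ^ 2)) * (-(q ^ 2 * (2 * x)))) x := by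
      have hin : HasDerivAt (fun x : ℝ => -(q ^ 2 * x ^ 2)) (-(q ^ 2 * (2 * x))) x := by
        have := ((hasDerivAt_pow 2 x).const_mul (q ^ 2)).neg
        simpa [Pi.neg_def] using this
      exact hin.exp
    have h2 : HasDerivAt (fun x : ℝ => E (q * x)) (Real.exp ((q * x) ^ 2) * q) x := by
      have := (hEderiv (q * x)).comp x ((hasDerivAt_id x).const_mul q)
      simpa [mul_comm, Function.comp_def] using this
    have h3 := (h1.mul h2).const_mul (1 / (c1 * q))
    refine HasDerivAt.congr_deriv h3 ?_
    rw [hκ, mul_pow, Real.exp_neg]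
    field_simp
    ring
  have hκcont : Continuous κ := by
    have hfun : κ = fun y => (1 / c1) * (1 - 2 * q * y * Real.exp (-(q ^ 2 * y ^ 2)) *
        E (q * y)) := funext hκ
    rw [hfun]
    have h4 : Continuous fun y : ℝ => Real.exp (-(q ^ 2 * y ^ 2)) :=
      Real.continuous_exp.comp ((continuous_const.mul (continuous_pow 2)).neg)
    have h5 : Continuous fun y : ℝ => E (q * y) :=
      hEcont.comp (continuous_const.mul continuous_id)
    exact continuous_const.mul (continuous_const.sub
      ((((continuous_const.mul continuous_id).mul h4).mul h5)))
  have hint : IntervalIntegrable κ volume 0 y := hκcont.intervalIntegrable _ _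
  have hFTC : (∫ η in (0:ℝ)..y, κ η) = G y - G 0 :=
    intervalIntegral.integral_eq_sub_of_hasDerivAt (fun x _ => hGderiv x) hint
  have hG0 : G 0 = 0 := by
    simp [hG, hE, intervalIntegral.integral_same]
  rw [hFTC, hG0, sub_zero, hκ, hc2eq, hG]
  have hEne : Real.exp (-(q ^ 2 * y ^ 2)) ≠ 0 := Real.exp_ne_zero _
  field_simp
  ring
end

section
/- Let ĉ₁, ĉ₂ > 0, set q = √(ĉ₂/(2ĉ₁)), and let δ > 0. If γ : [0, δ) → ℝ is differentiable with γ(0) = π/2 and satisfies −1 − ĉ₁·γ'(y)·sin(γ(y)) + ĉ₂·y·cos(γ(y)) = 0 for all y ∈ [0, δ), then cos(γ(y)) = (1/ĉ₁)·exp(−q²y²)·∫₀^{y} exp(q²s²) ds for all y ∈ [0, δ). -/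
open Real MeasureTheory intervalIntegral Set

/-- the solution of the local steady-state equation
`-1 - ĉ₁ γ'(y) sin γ(y) + ĉ₂ y cos γ(y) = 0` on `[0, δ)` with `γ(0) = π/2`
has `cos (γ(y))` given by the closed-form expression. -/
theorem local_equation_cos_gamma_closed_form
    (c1 c2 q δ : ℝ) (hc1 : 0 < c1) (hc2 : 0 < c2)
    (hq : q = Real.sqrt (c2 / (2 * c1))) (hδ : 0 < δ)
    (γ γ' : ℝ → ℝ)
    (hdiff : ∀ y ∈ Set.Ico (0:ℝ) δ, HasDerivWithinAt γ (γ' y) (Set.Ico (0:ℝ) δ) y)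
    (h0 : γ 0 = Real.pi / 2)
    (hode : ∀ y ∈ Set.Ico (0:ℝ) δ,
      -1 - c1 * γ' y * Real.sin (γ y) + c2 * y * Real.cos (γ y) = 0) :
    ∀ y ∈ Set.Ico (0:ℝ) δ,
      Real.cos (γ y) =
        (1 / c1) * Real.exp (-(q ^ 2 * y ^ 2)) * ∫ s in (0:ℝ)..y, Real.exp (q ^ 2 * s ^ 2) := by
  have hq2 : q ^ 2 = c2 / (2 * c1) := by
    rw [hq, sq_sqrt]; positivity
  have hcontint : Continuous fun s : ℝ => Real.exp (q ^ 2 * s ^ 2) := by continuity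
  set G : ℝ → ℝ := fun t => ∫ s in (0:ℝ)..t, Real.exp (q ^ 2 * s ^ 2) with hG
  have hGderiv : ∀ t : ℝ, HasDerivAt G (Real.exp (q ^ 2 * t ^ 2)) t := fun t =>
    (hcontint.integral_hasStrictDerivAt 0 t).hasDerivAt
  set F : ℝ → ℝ := fun t => Real.cos (γ t) * Real.exp (q ^ 2 * t ^ 2) - (1 / c1) * G t
    with hF
  intro y hy
  have hy0 : 0 ≤ y := hy.1
  have hyδ : y < δ := hy.2
  have hsub : Set.Icc (0:ℝ) y ⊆ Set.Ico (0:ℝ) δ := fun x hx =>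
    ⟨hx.1, lt_of_le_of_lt hx.2 hyδ⟩
  -- continuity of F on Icc 0 y
  have hγcont : ContinuousOn γ (Set.Ico (0:ℝ) δ) := fun x hx =>
    (hdiff x hx).continuousWithinAt
  have hFcont : ContinuousOn F (Set.Icc (0:ℝ) y) := by
    apply ContinuousOn.sub
    · exact ((Real.continuous_cos.comp_continuousOn (hγcont.mono hsub)).mul
        (hcontint.continuousOn))
    · exact (continuous_const.mul
        (continuous_iff_continuousAt.mpr fun t => (hGderiv t).continuousAt)).continuousOn
  -- derivative of F is 0
  have hFderiv : ∀ x ∈ Set.Ico (0:ℝ) y, HasDerivWithinAt F 0 (Set.Ici x) x := by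
    intro x hx
    have hxmem : x ∈ Set.Ico (0:ℝ) δ := ⟨hx.1, lt_trans hx.2 hyδ⟩
    have h1 : HasDerivAt (fun t : ℝ => q ^ 2 * t ^ 2) (q ^ 2 * (2 * x)) x := by
      simpa using (hasDerivAt_pow 2 x).const_mul (q ^ 2)
    have hexp : HasDerivAt (fun t : ℝ => Real.exp (q ^ 2 * t ^ 2))
        (Real.exp (q ^ 2 * x ^ 2) * (q ^ 2 * (2 * x))) x := h1.exp
    have hcos : HasDerivWithinAt (fun t => Real.cos (γ t))
        (-Real.sin (γ x) * γ' x) (Set.Ico (0:ℝ) δ) x := (hdiff x hxmem).cos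
    have hprod := hcos.mul hexp.hasDerivWithinAt
    have hGx := ((hGderiv x).const_mul (1 / c1)).hasDerivWithinAt
      (s := Set.Ico (0:ℝ) δ)
    have hF' := hprod.sub hGx
    have hode' := hode x hxmem
    have hderivval :
        -Real.sin (γ x) * γ' x * Real.exp (q ^ 2 * x ^ 2) +
            Real.cos (γ x) * (Real.exp (q ^ 2 * x ^ 2) * (q ^ 2 * (2 * x))) -
          1 / c1 * Real.exp (q ^ 2 * x ^ 2) = 0 := by
      have hsin : γ' x * Real.sin (γ x) = (c2 * x * Real.cos (γ x) - 1) / c1 := by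
        field_simp at hode' ⊢
        linarith
      have h2q : q ^ 2 * (2 * x) = c2 / c1 * x := by
        rw [hq2]; field_simp
      rw [h2q]
      have : -Real.sin (γ x) * γ' x = -((c2 * x * Real.cos (γ x) - 1) / c1) := by
        rw [← hsin]; ring
      rw [this]
      field_simp
      ring
    have hFzero : HasDerivWithinAt F 0 (Set.Ico (0:ℝ) δ) x := by
      rw [hderivval] at hF'; exact hF'
    -- transfer to Ici x
    have hmem : Set.Ico (0:ℝ) δ ∈ nhdsWithin x (Set.Ici x) := by
      apply Filter.mem_of_superset (Ico_mem_nhdsGE_of_mem ⟨le_refl x, hxmem.2⟩)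
      exact fun t ht => ⟨le_trans hx.1 ht.1, ht.2⟩
    exact hFzero.mono_of_mem_nhdsWithin hmem
  have hconst := constant_of_has_deriv_right_zero hFcont hFderiv y
    (Set.right_mem_Icc.mpr hy0)
  have hF0 : F 0 = 0 := by
    simp [hF, hG, h0, Real.cos_pi_div_two]
  rw [hF0] at hconst
  have hkey : Real.cos (γ y) * Real.exp (q ^ 2 * y ^ 2) = (1 / c1) * G y := by
    have := hconst
    simp only [hF] at this
    linarith
  have hexpne : Real.exp (q ^ 2 * y ^ 2) ≠ 0 := Real.exp_ne_zero _
  have hGy : G y = c1 * (Real.cos (γ y) * Real.exp (q ^ 2 * y ^ 2)) := by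
    rw [hkey]; field_simp
  rw [Real.exp_neg, show (∫ s in (0:ℝ)..y, Real.exp (q ^ 2 * s ^ 2)) = G y from rfl, hGy]
  field_simp
end

section
/- Let F(u) = ∫₀^{u} exp(t²) dt and f(u) = 1 − 2·u·exp(−u²)·F(u). Then there exists exactly one u₀ > 0 such that f(u₀) = 0; moreover f(u) > 0 for 0 ≤ u < u₀ and f(u) < 0 for u > u₀. Consequently, for ĉ₁ > 0 and q > 0 the function κ(y) = (1/ĉ₁)·f(q·y) has exactly one zero y₀ > 0, namely y₀ = u₀/q, which depends only on q and not on ĉ₁. -/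
open Real MeasureTheory intervalIntegral

/-- `F(u) = ∫₀^u exp(t²) dt`. -/
noncomputable def Ferf (u : ℝ) : ℝ := ∫ t in (0:ℝ)..u, Real.exp (t ^ 2)

/-- `f(u) = 1 - 2 u exp(-u²) F(u)`, the rescaled curvature function. -/
noncomputable def fker (u : ℝ) : ℝ := 1 - 2 * u * Real.exp (-(u ^ 2)) * Ferf u

/-- auxiliary: `G(u) = e^{u²} - 2 u F(u) = e^{u²} f(u)`. -/
noncomputable def Gker (u : ℝ) : ℝ := Real.exp (u ^ 2) - 2 * u * Ferf u

lemma cont_integrand : Continuous fun t : ℝ => Real.exp (t ^ 2) :=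
  Real.continuous_exp.comp (continuous_pow 2)

lemma Ferf_hasDerivAt (u : ℝ) : HasDerivAt Ferf (Real.exp (u ^ 2)) u :=
  intervalIntegral.integral_hasDerivAt_right
    (cont_integrand.intervalIntegrable 0 u)
    cont_integrand.aestronglyMeasurable.stronglyMeasurableAtFilter
    cont_integrand.continuousAt

lemma Ferf_strictMono : StrictMono Ferf :=
  strictMono_of_deriv_pos (fun u => by
    rw [(Ferf_hasDerivAt u).deriv]; positivity)

lemma Ferf_zero : Ferf 0 = 0 := intervalIntegral.integral_same

lemma Ferf_pos {u : ℝ} (hu : 0 < u) : 0 < Ferf u := by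
  have := Ferf_strictMono hu
  rwa [Ferf_zero] at this

lemma Ferf_one_ge : (1 : ℝ) ≤ Ferf 1 := by
  have h : (∫ t in (0:ℝ)..1, (1:ℝ)) ≤ ∫ t in (0:ℝ)..1, Real.exp (t ^ 2) := by
    apply intervalIntegral.integral_mono_on zero_le_one
      (intervalIntegrable_const) (cont_integrand.intervalIntegrable 0 1)
    intro t _
    have : (0:ℝ) ≤ t ^ 2 := sq_nonneg t
    calc (1:ℝ) = Real.exp 0 := (Real.exp_zero).symm
      _ ≤ Real.exp (t ^ 2) := Real.exp_le_exp.2 this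
  simpa [Ferf] using h

lemma Gker_hasDerivAt (u : ℝ) : HasDerivAt Gker (-(2 * Ferf u)) u := by
  have h1 : HasDerivAt (fun u : ℝ => Real.exp (u ^ 2)) (Real.exp (u ^ 2) * (2 * u)) u := by
    have hp : HasDerivAt (fun u : ℝ => u ^ 2) (2 * u) u := by
      simpa using (hasDerivAt_pow 2 u)
    exact (Real.hasDerivAt_exp (u ^ 2)).comp u hp
  have h2 : HasDerivAt (fun u : ℝ => 2 * u * Ferf u)
      (2 * Ferf u + 2 * u * Real.exp (u ^ 2)) u := by
    have := ((hasDerivAt_id u).const_mul 2).mul (Ferf_hasDerivAt u)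
    exact this.congr_deriv (by simp only [id, mul_one])
  have := h1.sub h2
  exact this.congr_deriv (by ring)

lemma Ferf_cont : Continuous Ferf :=
  continuous_iff_continuousAt.2 fun u => (Ferf_hasDerivAt u).continuousAt

lemma Gker_cont : Continuous Gker :=
  (cont_integrand).sub ((continuous_const.mul continuous_id).mul Ferf_cont)

lemma fker_eq (u : ℝ) : fker u = Real.exp (-(u ^ 2)) * Gker u := by
  unfold fker Gker
  have h : Real.exp (-(u ^ 2)) * Real.exp (u ^ 2) = 1 := by
    rw [← Real.exp_add]; simp
  linear_combination (-1 : ℝ) * h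

lemma Gker_strictAntiOn : StrictAntiOn Gker (Set.Ici (0 : ℝ)) := by
  apply strictAntiOn_of_deriv_neg (convex_Ici 0) Gker_cont.continuousOn
  intro u hu
  rw [interior_Ici] at hu
  rw [(Gker_hasDerivAt u).deriv]
  have := Ferf_pos hu
  linarith

lemma Gker_zero : Gker 0 = 1 := by simp [Gker, Ferf_zero]

lemma Gker_two_neg : Gker 2 < 0 := by
  -- H u = Gker u + 2 u is antitone on [1,2]
  have hH : ∀ u : ℝ, HasDerivAt (fun u => Gker u + 2 * u) (-(2 * Ferf u) + 2) u := by
    intro u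
    have h2 : HasDerivAt (fun u : ℝ => 2 * u) 2 u := by
      simpa using (hasDerivAt_id u).const_mul 2
    exact (Gker_hasDerivAt u).add h2
  have hanti : AntitoneOn (fun u => Gker u + 2 * u) (Set.Icc (1:ℝ) 2) := by
    apply antitoneOn_of_deriv_nonpos (convex_Icc 1 2)
      (Continuous.continuousOn (Gker_cont.add (by continuity)))
      (fun u _ => ((hH u).differentiableAt).differentiableWithinAt)
    intro u hu
    rw [interior_Icc] at hu
    show deriv (fun u => Gker u + 2 * u) u ≤ 0
    rw [(hH u).deriv]
    have h1 : (1:ℝ) ≤ Ferf u := le_trans Ferf_one_ge (Ferf_strictMono.le_iff_le.2 hu.1.le)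
    linarith
  have key : Gker 2 + 2 * 2 ≤ Gker 1 + 2 * 1 := by
    apply hanti (Set.left_mem_Icc.2 (by norm_num)) (Set.right_mem_Icc.2 (by norm_num))
    norm_num
  have hG1 : Gker 1 ≤ Real.exp 1 - 2 := by
    have := Ferf_one_ge
    simp only [Gker, one_pow]
    linarith
  have he : Real.exp 1 < 2.7182818286 := Real.exp_one_lt_d9
  linarith

lemma fker_sign (u : ℝ) : (0 < fker u ↔ 0 < Gker u) ∧ (fker u = 0 ↔ Gker u = 0) ∧
    (fker u < 0 ↔ Gker u < 0) := by
  have he : 0 < Real.exp (-(u ^ 2)) := Real.exp_pos _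
  rw [fker_eq]
  constructor
  · constructor
    · intro h
      by_contra hc; push_neg at hc
      nlinarith [mul_nonpos_of_nonneg_of_nonpos he.le hc]
    · exact fun h => mul_pos he h
  constructor
  · constructor
    · intro h
      rcases mul_eq_zero.1 h with h | h
      · exact absurd h he.ne'
      · exact h
    · intro h; rw [h, mul_zero]
  · constructor
    · intro h
      by_contra hc
      push_neg at hc
      nlinarith
    · intro h
      exact mul_neg_of_pos_of_neg he h

/-- `f` has exactly one zero `u₀ > 0`, with `f > 0` on `[0, u₀)` and
`f < 0` on `(u₀, ∞)`; consequently `κ(y) = (1/ĉ₁) f(q y)` has exactly one positive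
zero, namely `y₀ = u₀ / q`, which depends only on `q` and not on `ĉ₁`. -/
theorem fker_unique_zero :
    (∃! u₀ : ℝ, 0 < u₀ ∧ fker u₀ = 0) ∧
    ∀ u₀ : ℝ, 0 < u₀ → fker u₀ = 0 →
      (∀ u : ℝ, 0 ≤ u → u < u₀ → 0 < fker u) ∧
      (∀ u : ℝ, u₀ < u → fker u < 0) ∧
      (∀ c1 q : ℝ, 0 < c1 → 0 < q →
        ∀ y : ℝ, 0 < y → ((1 / c1) * fker (q * y) = 0 ↔ y = u₀ / q)) := by
  -- existence of a zero of Gker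
  obtain ⟨u₀, hu₀mem, hu₀⟩ : ∃ u₀ ∈ Set.Ioo (0:ℝ) 2, Gker u₀ = 0 := by
    have h := intermediate_value_Ioo' (by norm_num : (0:ℝ) ≤ 2) Gker_cont.continuousOn
    have : (0:ℝ) ∈ Set.Ioo (Gker 2) (Gker 0) := ⟨Gker_two_neg, by rw [Gker_zero]; norm_num⟩
    obtain ⟨u₀, hmem, heq⟩ := h this
    exact ⟨u₀, hmem, heq⟩
  have hu₀pos : 0 < u₀ := hu₀mem.1
  -- general sign facts
  have sign_lt : ∀ u : ℝ, 0 ≤ u → u < u₀ → 0 < Gker u := by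
    intro u hu hlt
    have := Gker_strictAntiOn hu hu₀pos.le hlt
    rwa [hu₀] at this
  have sign_gt : ∀ u : ℝ, u₀ < u → Gker u < 0 := by
    intro u hlt
    have := Gker_strictAntiOn hu₀pos.le (le_trans hu₀pos.le hlt.le) hlt
    rwa [hu₀] at this
  have huniq : ∀ u : ℝ, 0 < u → fker u = 0 → u = u₀ := by
    intro u hu hf
    have hG : Gker u = 0 := (fker_sign u).2.1.1 hf
    rcases lt_trichotomy u u₀ with h | h | h
    · exact absurd hG (ne_of_gt (sign_lt u hu.le h))
    · exact h
    · exact absurd hG (ne_of_lt (sign_gt u h))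
  have hfu₀ : fker u₀ = 0 := (fker_sign u₀).2.1.2 hu₀
  constructor
  · exact ⟨u₀, ⟨hu₀pos, hfu₀⟩, fun u ⟨hu, hf⟩ => huniq u hu hf⟩
  · intro v hv hfv
    have hveq : v = u₀ := huniq v hv hfv
    subst hveq
    refine ⟨fun u hu hlt => (fker_sign u).1.2 (sign_lt u hu hlt),
      fun u hlt => (fker_sign u).2.2.2 (sign_gt u hlt), ?_⟩
    intro c1 q hc1 hq y hy
    constructor
    · intro h
      have hne : (1 / c1 : ℝ) ≠ 0 := by positivity
      have hf0 : fker (q * y) = 0 := by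
        rcases mul_eq_zero.1 h with h | h
        · exact absurd h hne
        · exact h
      have := huniq (q * y) (mul_pos hq hy) hf0
      field_simp
      linarith [this]
    · intro h
      rw [h]
      have : q * (v / q) = v := by field_simp
      rw [this, hfv, mul_zero]
end

section
/- Let a > b > 0 and define E : [0, π/2] → ℝ by E(φ) = −1 + c₁·π·a²b²/(a²·sin²φ + b²·cos²φ)^{3/2} + c₂·π·a²b²·sin²φ/√(a²·sin²φ + b²·cos²φ). Then there exist no real numbers c₁, c₂ such that E(φ) = 0 for all φ ∈ [0, π/2]. In other words, among ellipses with semi-axes a ≥ b > 0, only circles (a = b) can satisfy the steady-state equation, and circles satisfy it exactly when c₂ = 0 and c₁ = 1/(aπ)·(1/a)·a = b/(a²π) with a = b. -/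
open Real Set

/-- Left-hand side of the steady-state equation evaluated along the ellipse
`x = a cos φ`, `y = b sin φ` (area `A = abπ`, curvature
`κ(φ) = ab/(a² sin²φ + b² cos²φ)^{3/2}`, height `y = b sin φ`,
`cos γ = a sin φ / √(a² sin²φ + b² cos²φ)`). -/
noncomputable def ellipseE (a b c1 c2 φ : ℝ) : ℝ :=
  -1 + c1 * Real.pi * a ^ 2 * b ^ 2 /
      (Real.sqrt (a ^ 2 * Real.sin φ ^ 2 + b ^ 2 * Real.cos φ ^ 2)) ^ 3
    + c2 * Real.pi * a ^ 2 * b ^ 2 * Real.sin φ ^ 2 /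
      Real.sqrt (a ^ 2 * Real.sin φ ^ 2 + b ^ 2 * Real.cos φ ^ 2)

/-- a genuine ellipse (`a > b > 0`) is never a steady-state shape:
no constants `c₁, c₂` make the steady-state equation hold all along it. Among
ellipses only circles (`a = b`) can be steady states, and a circle of radius `r`
satisfies the equation exactly when `c₂ = 0` and `c₁ = r/(r²π) = 1/(rπ)`. -/
theorem ellipse_not_steady_state
    (a b : ℝ) (hba : b < a) (hb : 0 < b) :
    (¬ ∃ c1 c2 : ℝ, ∀ φ ∈ Set.Icc (0:ℝ) (Real.pi / 2), ellipseE a b c1 c2 φ = 0) ∧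
    (∀ r : ℝ, 0 < r → ∀ c1 c2 : ℝ,
      ((∀ φ ∈ Set.Icc (0:ℝ) (Real.pi / 2), ellipseE r r c1 c2 φ = 0) ↔
        (c2 = 0 ∧ c1 = r / (r ^ 2 * Real.pi)))) := by
  have ha : (0:ℝ) < a := hb.trans hba
  have hpi : (0:ℝ) < Real.pi := Real.pi_pos
  constructor
  · rintro ⟨c1, c2, h⟩
    -- φ = 0
    have h0 := h 0 ⟨le_refl 0, by positivity⟩
    have h2 := h (Real.pi/2) ⟨by positivity, le_refl _⟩
    have h4 := h (Real.pi/4) ⟨by positivity, by linarith [hpi]⟩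
    rw [ellipseE] at h0 h2 h4
    simp only [Real.sin_zero, Real.cos_zero, Real.sin_pi_div_two, Real.cos_pi_div_two] at h0 h2
    rw [show a ^ 2 * (0:ℝ) ^ 2 + b ^ 2 * 1 ^ 2 = b ^ 2 by ring] at h0
    rw [show a ^ 2 * (1:ℝ) ^ 2 + b ^ 2 * 0 ^ 2 = a ^ 2 by ring] at h2
    rw [Real.sqrt_sq hb.le] at h0
    rw [Real.sqrt_sq ha.le] at h2
    have hs4 : Real.sin (Real.pi/4) ^ 2 = 1/2 := by
      rw [Real.sin_pi_div_four]
      rw [div_pow, sq_sqrt (by norm_num : (2:ℝ) ≥ 0)]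
      norm_num
    have hc4 : Real.cos (Real.pi/4) ^ 2 = 1/2 := by
      rw [Real.cos_pi_div_four]
      rw [div_pow, sq_sqrt (by norm_num : (2:ℝ) ≥ 0)]
      norm_num
    rw [hs4, hc4] at h4
    set s := Real.sqrt (a ^ 2 * (1/2) + b ^ 2 * (1/2)) with hs_def
    have hs_pos : 0 < s := Real.sqrt_pos.mpr (by positivity)
    have hs_sq : s ^ 2 = a ^ 2 * (1/2) + b ^ 2 * (1/2) := Real.sq_sqrt (by positivity)
    have hsab : a + b ≤ 2 * s := by
      nlinarith [sq_nonneg (a - b), sq_nonneg (2*s - (a+b)), hs_pos, ha, hb]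
    -- turn equations into polynomial form
    have hb3 : (b:ℝ)^3 ≠ 0 := by positivity
    have ha3 : (a:ℝ)^3 ≠ 0 := by positivity
    have hs3 : s^3 ≠ 0 := by positivity
    have e0 : c1 * Real.pi * a ^ 2 = b := by
      field_simp at h0
      have hb2 : (b:ℝ)^2 ≠ 0 := by positivity
      have : (c1 * Real.pi * a ^ 2) * b^2 = b * b^2 := by linear_combination b^2 * h0
      exact mul_right_cancel₀ hb2 this
    have e2 : c1 * Real.pi * a^2 * b^2 + c2 * Real.pi * a^4 * b^2 = a^3 := by
      have ha' : (a:ℝ) ≠ 0 := ha.ne'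
      field_simp at h2
      have h2' : (c1 * Real.pi * a^2*b^2 + c2*Real.pi*a^4*b^2) * a = a^3 * a := by
        linear_combination a^3 * h2
      exact mul_right_cancel₀ ha' h2' 
    have e4 : 2 * (c1 * Real.pi * a^2 * b^2) + (c2 * Real.pi * a^2 * b^2) * s^2 = 2 * s^3 := by
      have hs' : s ≠ 0 := hs_pos.ne'
      field_simp at h4
      have h4' : (2*(c1*Real.pi*a^2*b^2) + (c2*Real.pi*a^2*b^2)*s^2) * s = (2*s^3)*s := by
        linear_combination s * h4
      exact mul_right_cancel₀ hs' h4' 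
    -- derive
    have hQ : c2 * Real.pi * a^4 * b^2 = a^3 - b^3 := by
      linear_combination e2 - b^2 * e0
    have key : 2*a^2*b^3 + (a^3 - b^3) * s^2 = 2*a^2*s^3 := by
      linear_combination a^2 * e4 - 2*a^2*b^2 * e0 - s^2 * hQ
    have key2 : 2*a^2*b^3 + (a^3 - b^3)*(a^2*(1/2)+b^2*(1/2)) = a^2*s*(a^2+b^2) := by
      linear_combination key - (a^3-b^3)*hs_sq + 2*a^2*s*hs_sq
    have hint1 : 0 ≤ a^2*(a^2+b^2)*(2*s - (a+b)) :=
      mul_nonneg (by positivity) (by linarith)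
    have hint2 : 0 < b*(a^2-b^2)^2 :=
      mul_pos hb (pow_pos (by nlinarith) 2)
    nlinarith [key2, hint1, hint2]
  · intro r hr c1 c2
    have hr2 : ∀ φ : ℝ, r ^ 2 * Real.sin φ ^ 2 + r ^ 2 * Real.cos φ ^ 2 = r ^ 2 := by
      intro φ; rw [← mul_add, Real.sin_sq_add_cos_sq, mul_one]
    constructor
    · intro h
      have h0 := h 0 ⟨le_refl 0, by positivity⟩
      have h2 := h (Real.pi/2) ⟨by positivity, le_refl _⟩
      rw [ellipseE, hr2, Real.sqrt_sq hr.le] at h0 h2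
      simp only [Real.sin_zero, Real.sin_pi_div_two] at h0 h2
      have hrne : r ≠ 0 := hr.ne'
      have hpine : Real.pi ≠ 0 := hpi.ne'
      field_simp at h0 h2
      have hc2 : c2 * (Real.pi * r^7) = 0 := by linear_combination r^4 * (h2 - h0)
      have hne7 : (Real.pi * r^7) ≠ 0 := by positivity
      have hc2' : c2 = 0 := (mul_eq_zero.mp hc2).resolve_right hne7
      refine ⟨hc2', ?_⟩
      rw [eq_div_iff (by positivity : (r^2*Real.pi) ≠ 0)]
      have h0' : (c1 * (r^2*Real.pi)) * r^2 = r * r^2 := by linear_combination r^3 * h0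
      exact mul_right_cancel₀ (by positivity : (r:ℝ)^2 ≠ 0) h0' 
    · rintro ⟨hc2, hc1⟩ φ hφ
      rw [ellipseE, hr2, Real.sqrt_sq hr.le, hc2, hc1]
      have e1 : r / (r^2*Real.pi) * Real.pi * r^2 * r^2 / r^3 = 1 := by
        field_simp
      have e2 : (0:ℝ) * Real.pi * r^2 * r^2 * Real.sin φ^2 / r = 0 := by
        simp
      rw [e1, e2]
      norm_num
end
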